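/- Let 𝕂 be a field, r and s nonzero in 𝕂 with r ≠ s, and let φ, φ′ be nonzero elements of 𝕂. Then the 𝕂-vector space with basis {v_j : j ∈ ℕ} carries a (unique) U_{r,s}(sl_2)-module structure in which ω.v_j = φ(rs⁻¹)⁻ʲ v_j, ω′.v_j = φ′(rs⁻¹)ʲ v_j, f.v_j = [j+1] v_{j+1}, and e.v_j = ((r^{1−j}φ − s^{1−j}φ′)/(r − s)) v_{j−1} (with v_{−1} = 0). (This realizes the Verma module M(φ) of highest weight (φ, φ′) via the basis v_j = f^j/[j]! ⊗ v_φ used in Proposition 2.9.) -/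

import Mathlib

/-- Generators of `U_{r,s}(sl_2)`: `e`, `f`, `ω`, `ω⁻¹`, `ω′`, `ω′⁻¹`. -/
inductive UGen : Type
  | e | f | w | winv | w' | w'inv

open FreeAlgebra in
/-- The defining relations of `U_{r,s}(sl_2)`. -/
inductive URel (𝕂 : Type) [Field 𝕂] (r s : 𝕂) :
    FreeAlgebra 𝕂 UGen → FreeAlgebra 𝕂 UGen → Prop
  | winv_right : URel 𝕂 r s (ι 𝕂 .w * ι 𝕂 .winv) 1
  | winv_left : URel 𝕂 r s (ι 𝕂 .winv * ι 𝕂 .w) 1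
  | w'inv_right : URel 𝕂 r s (ι 𝕂 .w' * ι 𝕂 .w'inv) 1
  | w'inv_left : URel 𝕂 r s (ι 𝕂 .w'inv * ι 𝕂 .w') 1
  | ww' : URel 𝕂 r s (ι 𝕂 .w * ι 𝕂 .w') (ι 𝕂 .w' * ι 𝕂 .w)
  | we : URel 𝕂 r s (ι 𝕂 .w * ι 𝕂 .e) ((r * s⁻¹) • (ι 𝕂 .e * ι 𝕂 .w))
  | wf : URel 𝕂 r s (ι 𝕂 .w * ι 𝕂 .f) ((r⁻¹ * s) • (ι 𝕂 .f * ι 𝕂 .w))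
  | w'e : URel 𝕂 r s (ι 𝕂 .w' * ι 𝕂 .e) ((r⁻¹ * s) • (ι 𝕂 .e * ι 𝕂 .w'))
  | w'f : URel 𝕂 r s (ι 𝕂 .w' * ι 𝕂 .f) ((r * s⁻¹) • (ι 𝕂 .f * ι 𝕂 .w'))
  | ef : URel 𝕂 r s (ι 𝕂 .e * ι 𝕂 .f - ι 𝕂 .f * ι 𝕂 .e)
      ((r - s)⁻¹ • (ι 𝕂 .w - ι 𝕂 .w'))

/-- The two-parameter quantum group `U_{r,s}(sl_2)`: the quotient of the free
algebra on the six generators by the defining relations. -/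
abbrev Ursl2 (𝕂 : Type) [Field 𝕂] (r s : 𝕂) : Type := RingQuot (URel 𝕂 r s)

/-- The image of a generator in `U_{r,s}(sl_2)`. -/
def UGen.toU {𝕂 : Type} [Field 𝕂] (r s : 𝕂) (x : UGen) : Ursl2 𝕂 r s :=
  RingQuot.mkAlgHom 𝕂 (URel 𝕂 r s) (FreeAlgebra.ι 𝕂 x)

/-- The quantum integer `[m] = (rᵐ − sᵐ)/(r − s)`. -/
def qInt {𝕂 : Type} [Field 𝕂] (r s : 𝕂) (m : ℕ) : 𝕂 := (r ^ m - s ^ m) / (r - s)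

section Aux
variable {𝕂 : Type} [Field 𝕂]

/-- Diagonal endomorphism. -/
noncomputable def diagE (g : ℕ → 𝕂) : Module.End 𝕂 (ℕ →₀ 𝕂) :=
  Finsupp.lsum 𝕂 fun j => g j • Finsupp.lsingle j

/-- Shift-up endomorphism. -/
noncomputable def upE (g : ℕ → 𝕂) : Module.End 𝕂 (ℕ →₀ 𝕂) :=
  Finsupp.lsum 𝕂 fun j => g j • Finsupp.lsingle (j + 1)

/-- Shift-down endomorphism. -/
noncomputable def downE (g : ℕ → 𝕂) : Module.End 𝕂 (ℕ →₀ 𝕂) :=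
  Finsupp.lsum 𝕂 fun j => Nat.casesOn j 0 fun k => g k • Finsupp.lsingle k

@[simp] lemma diagE_single (g : ℕ → 𝕂) (j : ℕ) (x : 𝕂) :
    diagE g (Finsupp.single j x) = g j • Finsupp.single j x := by
  simp [diagE, Finsupp.lsum_single, Finsupp.smul_single]

@[simp] lemma upE_single (g : ℕ → 𝕂) (j : ℕ) (x : 𝕂) :
    upE g (Finsupp.single j x) = g j • Finsupp.single (j + 1) x := by
  simp [upE, Finsupp.lsum_single, Finsupp.smul_single]

@[simp] lemma downE_single_zero (g : ℕ → 𝕂) (x : 𝕂) :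
    downE g (Finsupp.single 0 x) = 0 := by
  simp [downE, Finsupp.lsum_single]

@[simp] lemma downE_single_succ (g : ℕ → 𝕂) (k : ℕ) (x : 𝕂) :
    downE g (Finsupp.single (k + 1) x) = g k • Finsupp.single k x := by
  simp [downE, Finsupp.lsum_single, Finsupp.smul_single]

/-- The generator images. -/
noncomputable def genMap (r s φ φ' : 𝕂) : UGen → Module.End 𝕂 (ℕ →₀ 𝕂)
  | .e => downE fun k => (r ^ (-(k : ℤ)) * φ - s ^ (-(k : ℤ)) * φ') / (r - s)
  | .f => upE fun j => qInt r s (j + 1)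
  | .w => diagE fun j => φ * (r * s⁻¹) ^ (-(j : ℤ))
  | .winv => diagE fun j => (φ * (r * s⁻¹) ^ (-(j : ℤ)))⁻¹
  | .w' => diagE fun j => φ' * (r * s⁻¹) ^ (j : ℤ)
  | .w'inv => diagE fun j => (φ' * (r * s⁻¹) ^ (j : ℤ))⁻¹

end Aux

section Rel
set_option maxHeartbeats 1600000
variable {𝕂 : Type} [Field 𝕂] (r s φ φ' : 𝕂)

lemma genMap_rel (hr : r ≠ 0) (hs : s ≠ 0) (hrs : r ≠ s) (hφ : φ ≠ 0) (hφ' : φ' ≠ 0) :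
    ∀ ⦃x y : FreeAlgebra 𝕂 UGen⦄, URel 𝕂 r s x y →
      FreeAlgebra.lift 𝕂 (genMap r s φ φ') x = FreeAlgebra.lift 𝕂 (genMap r s φ φ') y := by
  have hq : r * s⁻¹ ≠ 0 := mul_ne_zero hr (inv_ne_zero hs)
  have hrs' : r - s ≠ 0 := sub_ne_zero.mpr hrs
  intro x y h
  induction h with
  | winv_right =>
      simp only [map_mul, map_one, FreeAlgebra.lift_ι_apply, genMap]
      apply Finsupp.lhom_ext'; intro j; apply LinearMap.ext_ring
      simp only [LinearMap.comp_apply, Finsupp.lsingle_apply, Module.End.mul_apply,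
        diagE_single, map_smul, Module.End.one_apply, smul_smul]
      rw [inv_mul_cancel₀ (mul_ne_zero hφ (zpow_ne_zero _ hq)), one_smul]
  | winv_left =>
      simp only [map_mul, map_one, FreeAlgebra.lift_ι_apply, genMap]
      apply Finsupp.lhom_ext'; intro j; apply LinearMap.ext_ring
      simp only [LinearMap.comp_apply, Finsupp.lsingle_apply, Module.End.mul_apply,
        diagE_single, map_smul, Module.End.one_apply, smul_smul]
      rw [mul_inv_cancel₀ (mul_ne_zero hφ (zpow_ne_zero _ hq)), one_smul]
  | w'inv_right =>
      simp only [map_mul, map_one, FreeAlgebra.lift_ι_apply, genMap]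
      apply Finsupp.lhom_ext'; intro j; apply LinearMap.ext_ring
      simp only [LinearMap.comp_apply, Finsupp.lsingle_apply, Module.End.mul_apply,
        diagE_single, map_smul, Module.End.one_apply, smul_smul]
      rw [inv_mul_cancel₀ (mul_ne_zero hφ' (zpow_ne_zero _ hq)), one_smul]
  | w'inv_left =>
      simp only [map_mul, map_one, FreeAlgebra.lift_ι_apply, genMap]
      apply Finsupp.lhom_ext'; intro j; apply LinearMap.ext_ring
      simp only [LinearMap.comp_apply, Finsupp.lsingle_apply, Module.End.mul_apply,
        diagE_single, map_smul, Module.End.one_apply, smul_smul]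
      rw [mul_inv_cancel₀ (mul_ne_zero hφ' (zpow_ne_zero _ hq)), one_smul]
  | ww' =>
      simp only [map_mul, FreeAlgebra.lift_ι_apply, genMap]
      apply Finsupp.lhom_ext'; intro j; apply LinearMap.ext_ring
      simp only [LinearMap.comp_apply, Finsupp.lsingle_apply, Module.End.mul_apply,
        diagE_single, map_smul, smul_smul]
      ring_nf
  | we =>
      simp only [map_mul, map_smul, FreeAlgebra.lift_ι_apply, genMap]
      apply Finsupp.lhom_ext'; intro j; apply LinearMap.ext_ring
      cases j with
      | zero =>
        simp only [LinearMap.comp_apply, Finsupp.lsingle_apply, Module.End.mul_apply,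
          LinearMap.smul_apply, downE_single_zero, map_zero, smul_zero, diagE_single, map_smul]
      | succ k =>
        simp only [LinearMap.comp_apply, Finsupp.lsingle_apply, Module.End.mul_apply,
          LinearMap.smul_apply, downE_single_succ, diagE_single, map_smul, smul_smul]
        congr 1
        push_cast
        rw [show (-((k:ℤ)+1)) = -(k:ℤ) + (-1) by ring, zpow_add₀ hq, zpow_neg_one]
        linear_combination (-(φ * (r*s⁻¹)^(-(k:ℤ)) *
          ((r^(-(k:ℤ))*φ - s^(-(k:ℤ))*φ')/(r-s)))) * mul_inv_cancel₀ hq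
  | wf =>
      simp only [map_mul, map_smul, FreeAlgebra.lift_ι_apply, genMap]
      apply Finsupp.lhom_ext'; intro j; apply LinearMap.ext_ring
      simp only [LinearMap.comp_apply, Finsupp.lsingle_apply, Module.End.mul_apply,
        LinearMap.smul_apply, upE_single, diagE_single, map_smul, smul_smul]
      congr 1
      push_cast
      rw [show (-((j:ℤ)+1)) = -(j:ℤ) + (-1) by ring, zpow_add₀ hq, zpow_neg_one]
      have h2 : (r*s⁻¹)⁻¹ = r⁻¹ * s := by rw [mul_inv, inv_inv]
      linear_combination (qInt r s (j+1) * φ * (r*s⁻¹)^(-(j:ℤ))) * h2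
  | w'e =>
      simp only [map_mul, map_smul, FreeAlgebra.lift_ι_apply, genMap]
      apply Finsupp.lhom_ext'; intro j; apply LinearMap.ext_ring
      cases j with
      | zero =>
        simp only [LinearMap.comp_apply, Finsupp.lsingle_apply, Module.End.mul_apply,
          LinearMap.smul_apply, downE_single_zero, map_zero, smul_zero, diagE_single, map_smul]
      | succ k =>
        simp only [LinearMap.comp_apply, Finsupp.lsingle_apply, Module.End.mul_apply,
          LinearMap.smul_apply, downE_single_succ, diagE_single, map_smul, smul_smul]
        congr 1
        push_cast
        rw [zpow_add_one₀ hq]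
        have h3 : r⁻¹ * s * (r*s⁻¹) = 1 := by field_simp
        linear_combination (-(φ' * (r*s⁻¹)^(k:ℤ) *
          ((r^(-(k:ℤ))*φ - s^(-(k:ℤ))*φ')/(r-s)))) * h3
  | w'f =>
      simp only [map_mul, map_smul, FreeAlgebra.lift_ι_apply, genMap]
      apply Finsupp.lhom_ext'; intro j; apply LinearMap.ext_ring
      simp only [LinearMap.comp_apply, Finsupp.lsingle_apply, Module.End.mul_apply,
        LinearMap.smul_apply, upE_single, diagE_single, map_smul, smul_smul]
      congr 1
      push_cast
      rw [zpow_add_one₀ hq]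
      ring
  | ef =>
      simp only [map_mul, map_sub, map_smul, FreeAlgebra.lift_ι_apply, genMap]
      apply Finsupp.lhom_ext'; intro j; apply LinearMap.ext_ring
      cases j with
      | zero =>
        simp only [LinearMap.comp_apply, Finsupp.lsingle_apply, LinearMap.sub_apply,
          Module.End.mul_apply, LinearMap.smul_apply, downE_single_zero, map_zero,
          upE_single, downE_single_succ, diagE_single, map_smul, smul_smul, sub_zero,
          smul_sub, ← sub_smul]
        congr 1
        simp only [qInt, pow_one, Nat.cast_zero, neg_zero, zpow_zero, mul_one, one_mul]
        field_simp
        ring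
      | succ k =>
        simp only [LinearMap.comp_apply, Finsupp.lsingle_apply, LinearMap.sub_apply,
          Module.End.mul_apply, LinearMap.smul_apply, upE_single, downE_single_succ,
          diagE_single, map_smul, smul_smul, smul_sub, ← sub_smul]
        congr 1
        simp only [qInt]
        push_cast
        simp only [zpow_neg, zpow_add₀ hr, zpow_add₀ hs, zpow_one, zpow_natCast,
          mul_zpow, inv_zpow, mul_inv, inv_inv, pow_succ, mul_pow, inv_pow]
        have hR : (r:𝕂)^k ≠ 0 := pow_ne_zero _ hr
        have hS : (s:𝕂)^k ≠ 0 := pow_ne_zero _ hs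
        obtain ⟨t, ht, hts⟩ : ∃ t, t ≠ 0 ∧ r - s = t := ⟨r - s, hrs', rfl⟩
        rw [hts]
        have hA : r^k * (r^k)⁻¹ = 1 := mul_inv_cancel₀ hR
        have hB : s^k * (s^k)⁻¹ = 1 := mul_inv_cancel₀ hS
        have hc : r * r⁻¹ = 1 := mul_inv_cancel₀ hr
        have hd : s * s⁻¹ = 1 := mul_inv_cancel₀ hs
        have htu : t * t⁻¹ = 1 := mul_inv_cancel₀ ht
        linear_combination
          (t⁻¹^2*(r^2*r⁻¹*φ - r*φ)) * hA
          + (t⁻¹^2*(s^2*s⁻¹*φ' - s*φ')) * hB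
          + (t⁻¹^2*(r*φ - (r^k)⁻¹*s^k*φ*s)) * hc
          + (t⁻¹^2*(s*φ' - (s^k)⁻¹*r^k*φ'*r)) * hd
          + (t⁻¹*((r^k)⁻¹*s^k*φ*s*r⁻¹ - (s^k)⁻¹*r^k*φ'*r*s⁻¹)) * htu
          + (t⁻¹^2*((r^k)⁻¹*s^k*φ*s*r⁻¹ - (s^k)⁻¹*r^k*φ'*r*s⁻¹)) * hts

end Rel

/-- The Verma module `M(φ)` of `U_{r,s}(sl_2)`: the `𝕂`-vector space with basis
`{v_j : j ∈ ℕ}` carries a unique `U_{r,s}(sl_2)`-module structure (i.e. there is a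
unique algebra homomorphism into its `𝕂`-linear endomorphisms) in which
`ω.v_j = φ(rs⁻¹)⁻ʲ v_j`, `ω′.v_j = φ′(rs⁻¹)ʲ v_j`, `f.v_j = [j+1] v_{j+1}` and
`e.v_j = ((r^{1−j}φ − s^{1−j}φ′)/(r − s)) v_{j−1}` (with `v_{−1} = 0`). -/
theorem stmt9 {𝕂 : Type} [Field 𝕂] (r s : 𝕂) (hr : r ≠ 0) (hs : s ≠ 0) (hrs : r ≠ s)
    (φ φ' : 𝕂) (hφ : φ ≠ 0) (hφ' : φ' ≠ 0) :
    ∃! ρ : Ursl2 𝕂 r s →ₐ[𝕂] Module.End 𝕂 (ℕ →₀ 𝕂),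
      (∀ j : ℕ, ρ (UGen.toU r s .w) (Finsupp.single j 1) =
        (φ * (r * s⁻¹) ^ (-(j : ℤ))) • Finsupp.single j 1) ∧
      (∀ j : ℕ, ρ (UGen.toU r s .w') (Finsupp.single j 1) =
        (φ' * (r * s⁻¹) ^ (j : ℤ)) • Finsupp.single j 1) ∧
      (∀ j : ℕ, ρ (UGen.toU r s .f) (Finsupp.single j 1) =
        qInt r s (j + 1) • Finsupp.single (j + 1) 1) ∧
      (ρ (UGen.toU r s .e) (Finsupp.single 0 1) = 0) ∧
      (∀ j : ℕ, ρ (UGen.toU r s .e) (Finsupp.single (j + 1) 1) =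
        ((r ^ (-(j : ℤ)) * φ - s ^ (-(j : ℤ)) * φ') / (r - s)) • Finsupp.single j 1) := by
  classical
  let ρ0 : Ursl2 𝕂 r s →ₐ[𝕂] Module.End 𝕂 (ℕ →₀ 𝕂) :=
    RingQuot.liftAlgHom 𝕂 ⟨FreeAlgebra.lift 𝕂 (genMap r s φ φ'),
      genMap_rel r s φ φ' hr hs hrs hφ hφ'⟩
  have hgen : ∀ g : UGen, ρ0 (UGen.toU r s g) = genMap r s φ φ' g := by
    intro g
    show RingQuot.liftAlgHom 𝕂 ⟨FreeAlgebra.lift 𝕂 (genMap r s φ φ'), _⟩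
      (RingQuot.mkAlgHom 𝕂 _ (FreeAlgebra.ι 𝕂 g)) = _
    rw [RingQuot.liftAlgHom_mkAlgHom_apply]
    exact FreeAlgebra.lift_ι_apply _ _
  refine ⟨ρ0, ⟨?_, ?_, ?_, ?_, ?_⟩, ?_⟩
  · intro j; rw [hgen]; simp only [genMap]; exact diagE_single _ j 1
  · intro j; rw [hgen]; simp only [genMap]; exact diagE_single _ j 1
  · intro j; rw [hgen]; simp only [genMap]; exact upE_single _ j 1
  · rw [hgen]; simp only [genMap]; exact downE_single_zero _ 1
  · intro j; rw [hgen]; simp only [genMap]; exact downE_single_succ _ j 1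
  · rintro ρ ⟨h1, h2, h3, h4, h5⟩
    have hw : ρ (UGen.toU r s UGen.w) = ρ0 (UGen.toU r s UGen.w) := by
      apply Finsupp.lhom_ext'; intro j; apply LinearMap.ext_ring
      simp only [LinearMap.comp_apply, Finsupp.lsingle_apply]
      rw [h1 j, hgen]
      simp only [genMap]
      rw [diagE_single]
    have hw' : ρ (UGen.toU r s UGen.w') = ρ0 (UGen.toU r s UGen.w') := by
      apply Finsupp.lhom_ext'; intro j; apply LinearMap.ext_ring
      simp only [LinearMap.comp_apply, Finsupp.lsingle_apply]
      rw [h2 j, hgen]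
      simp only [genMap]
      rw [diagE_single]
    have hf : ρ (UGen.toU r s UGen.f) = ρ0 (UGen.toU r s UGen.f) := by
      apply Finsupp.lhom_ext'; intro j; apply LinearMap.ext_ring
      simp only [LinearMap.comp_apply, Finsupp.lsingle_apply]
      rw [h3 j, hgen]
      simp only [genMap]
      rw [upE_single]
    have he : ρ (UGen.toU r s UGen.e) = ρ0 (UGen.toU r s UGen.e) := by
      apply Finsupp.lhom_ext'; intro j; apply LinearMap.ext_ring
      simp only [LinearMap.comp_apply, Finsupp.lsingle_apply]
      cases j with
      | zero =>
        rw [h4, hgen]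
        simp only [genMap]
        rw [downE_single_zero]
      | succ k =>
        rw [h5 k, hgen]
        simp only [genMap]
        rw [downE_single_succ]
    have ew1 : UGen.toU r s UGen.w * UGen.toU r s UGen.winv = 1 := by
      rw [UGen.toU, UGen.toU, ← map_mul,
        RingQuot.mkAlgHom_rel 𝕂 URel.winv_right, map_one]
    have ew2 : UGen.toU r s UGen.winv * UGen.toU r s UGen.w = 1 := by
      rw [UGen.toU, UGen.toU, ← map_mul,
        RingQuot.mkAlgHom_rel 𝕂 URel.winv_left, map_one]
    have ew1' : UGen.toU r s UGen.w' * UGen.toU r s UGen.w'inv = 1 := by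
      rw [UGen.toU, UGen.toU, ← map_mul,
        RingQuot.mkAlgHom_rel 𝕂 URel.w'inv_right, map_one]
    have ew2' : UGen.toU r s UGen.w'inv * UGen.toU r s UGen.w' = 1 := by
      rw [UGen.toU, UGen.toU, ← map_mul,
        RingQuot.mkAlgHom_rel 𝕂 URel.w'inv_left, map_one]
    have hwinv : ρ (UGen.toU r s UGen.winv) = ρ0 (UGen.toU r s UGen.winv) := by
      have a1 : ρ (UGen.toU r s UGen.w) * ρ (UGen.toU r s UGen.winv) = 1 := by
        rw [← map_mul, ew1, map_one]
      have a2 : ρ0 (UGen.toU r s UGen.winv) * ρ0 (UGen.toU r s UGen.w) = 1 := by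
        rw [← map_mul, ew2, map_one]
      calc ρ (UGen.toU r s UGen.winv) = 1 * ρ (UGen.toU r s UGen.winv) := (one_mul _).symm
        _ = ρ0 (UGen.toU r s UGen.winv) * ρ0 (UGen.toU r s UGen.w) *
              ρ (UGen.toU r s UGen.winv) := by rw [a2]
        _ = ρ0 (UGen.toU r s UGen.winv) * (ρ (UGen.toU r s UGen.w) *
              ρ (UGen.toU r s UGen.winv)) := by rw [mul_assoc, hw]
        _ = ρ0 (UGen.toU r s UGen.winv) := by rw [a1, mul_one]
    have hw'inv : ρ (UGen.toU r s UGen.w'inv) = ρ0 (UGen.toU r s UGen.w'inv) := by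
      have a1 : ρ (UGen.toU r s UGen.w') * ρ (UGen.toU r s UGen.w'inv) = 1 := by
        rw [← map_mul, ew1', map_one]
      have a2 : ρ0 (UGen.toU r s UGen.w'inv) * ρ0 (UGen.toU r s UGen.w') = 1 := by
        rw [← map_mul, ew2', map_one]
      calc ρ (UGen.toU r s UGen.w'inv) = 1 * ρ (UGen.toU r s UGen.w'inv) := (one_mul _).symm
        _ = ρ0 (UGen.toU r s UGen.w'inv) * ρ0 (UGen.toU r s UGen.w') *
              ρ (UGen.toU r s UGen.w'inv) := by rw [a2]
        _ = ρ0 (UGen.toU r s UGen.w'inv) * (ρ (UGen.toU r s UGen.w') *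
              ρ (UGen.toU r s UGen.w'inv)) := by rw [mul_assoc, hw']
        _ = ρ0 (UGen.toU r s UGen.w'inv) := by rw [a1, mul_one]
    have key : ∀ g : UGen, ρ (UGen.toU r s g) = ρ0 (UGen.toU r s g) := by
      intro g
      cases g with
      | e => exact he
      | f => exact hf
      | w => exact hw
      | winv => exact hwinv
      | w' => exact hw'
      | w'inv => exact hw'inv
    apply RingQuot.ringQuot_ext'
    apply FreeAlgebra.hom_ext
    funext g
    simpa [UGen.toU] using key g
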